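/- Stability criterion of the predictor–corrector scheme: Let c > 0, ℵ > 0, θ ≥ 0, ς ∈ ℝ and ξ ∈ (0, π]. Set ζ = sin²(ξ/2), ħ = 1 + (4ς²/3)ζ, 𝔡 = 4c²ℵ²ζ, β = cℵ·sin ξ, and let ρ± = 1 − 𝔡(1+θ)/(2ħ) ± i·β/√ħ. Then |ρ⁺| ≤ 1 (equivalently |ρ⁻| ≤ 1) if and only if c²ℵ²(1+θ)²·ζ ≤ (1 + (4ς²/3)·ζ)·(ζ + θ). -/

import Mathlib

lemma abs_le_one_iff_aux (x y : ℝ) (z : ℂ)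
    (h : z = (x:ℂ) + Complex.I * (y:ℂ) ∨ z = (x:ℂ) - Complex.I * (y:ℂ)) :
    ‖z‖ ≤ 1 ↔ x ^ 2 + y ^ 2 ≤ 1 := by
  have hn : Complex.normSq z = x ^ 2 + y ^ 2 := by
    rcases h with h | h <;> subst h <;> simp [Complex.normSq_apply] <;> ring
  rw [Complex.norm_def, hn, Real.sqrt_le_one]



/-- Stability criterion of the predictor–corrector scheme: the transmission
factors `ρ± = 1 − 𝔡(1+θ)/(2ħ) ± iβ/√ħ` satisfy `|ρ±| ≤ 1` iff
`c²ℵ²(1+θ)²ζ ≤ (1 + (4ς²/3)ζ)(ζ + θ)`. -/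
theorem vonNeumann_stability_criterion
    (c al θ ς ξ : ℝ) (hc : 0 < c) (hal : 0 < al) (hθ : 0 ≤ θ)
    (hξ : ξ ∈ Set.Ioc (0 : ℝ) Real.pi)
    (ζ hbar dd β : ℝ)
    (hζ : ζ = Real.sin (ξ / 2) ^ 2)
    (hhbar : hbar = 1 + 4 * ς ^ 2 / 3 * ζ)
    (hdd : dd = 4 * c ^ 2 * al ^ 2 * ζ)
    (hβ : β = c * al * Real.sin ξ)
    (ρp ρm : ℂ)
    (hρp : ρp = ((1 - dd * (1 + θ) / (2 * hbar) : ℝ) : ℂ)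
        + Complex.I * ((β / Real.sqrt hbar : ℝ) : ℂ))
    (hρm : ρm = ((1 - dd * (1 + θ) / (2 * hbar) : ℝ) : ℂ)
        - Complex.I * ((β / Real.sqrt hbar : ℝ) : ℂ)) :
    (‖ρp‖ ≤ 1 ↔
      c ^ 2 * al ^ 2 * (1 + θ) ^ 2 * ζ ≤ (1 + 4 * ς ^ 2 / 3 * ζ) * (ζ + θ)) ∧
    (‖ρm‖ ≤ 1 ↔
      c ^ 2 * al ^ 2 * (1 + θ) ^ 2 * ζ ≤ (1 + 4 * ς ^ 2 / 3 * ζ) * (ζ + θ)) := by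
  have hξ0 := hξ.1
  have hξπ := hξ.2
  have hsin2 : 0 < Real.sin (ξ / 2) := by
    apply Real.sin_pos_of_pos_of_lt_pi (by linarith)
    nlinarith [Real.pi_pos]
  have hζ0 : 0 < ζ := by rw [hζ]; positivity
  have hhb0 : 0 < hbar := by rw [hhbar]; positivity
  have hsq : Real.sqrt hbar ^ 2 = hbar := Real.sq_sqrt hhb0.le
  have hsin : Real.sin ξ = 2 * Real.sin (ξ/2) * Real.cos (ξ/2) := by
    rw [← Real.sin_two_mul]; ring_nf
  have hcos : Real.cos (ξ/2) ^ 2 = 1 - ζ := by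
    rw [hζ, ← Real.sin_sq_add_cos_sq (ξ/2)]; ring
  have hβ2 : β ^ 2 = 4 * c ^ 2 * al ^ 2 * ζ * (1 - ζ) := by
    rw [hβ, hsin, ← hcos, hζ]; ring
  have key : (1 - dd * (1 + θ) / (2 * hbar)) ^ 2 + (β / Real.sqrt hbar) ^ 2 ≤ 1 ↔
      c ^ 2 * al ^ 2 * (1 + θ) ^ 2 * ζ ≤ (1 + 4 * ς ^ 2 / 3 * ζ) * (ζ + θ) := by
    have hb2 : (β / Real.sqrt hbar) ^ 2 = β ^ 2 / hbar := by rw [div_pow, hsq]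
    rw [hb2]
    have hne : hbar ≠ 0 := hhb0.ne'
    have expand : (1 - dd * (1 + θ) / (2 * hbar)) ^ 2 + β ^ 2 / hbar
        = 1 - (dd * (1 + θ) * hbar - dd ^ 2 * (1 + θ) ^ 2 / 4 - β ^ 2 * hbar) / hbar ^ 2 := by
      field_simp
      ring
    rw [expand, sub_le_self_iff, le_div_iff₀ (by positivity : (0:ℝ) < hbar ^ 2), zero_mul]
    have e : dd * (1 + θ) * hbar - dd ^ 2 * (1 + θ) ^ 2 / 4 - β ^ 2 * hbar
        = (4 * c ^ 2 * al ^ 2 * ζ) *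
          ((1 + 4 * ς ^ 2 / 3 * ζ) * (ζ + θ) - c ^ 2 * al ^ 2 * (1 + θ) ^ 2 * ζ) := by
      rw [hdd, hβ2, hhbar]; ring
    rw [e]
    have hK : (0:ℝ) < 4 * c ^ 2 * al ^ 2 * ζ := by positivity
    rw [mul_nonneg_iff_of_pos_left hK, sub_nonneg]
  constructor
  · rw [abs_le_one_iff_aux _ _ _ (Or.inl hρp)]; exact key
  · rw [abs_le_one_iff_aux _ _ _ (Or.inr hρm)]; exact key
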